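/- Let E be a finite set of edges with positive real length function l, and let P be a DP-system on a connected metric graph Γ assembled from E with a nonempty set of initial vertices. Then there exists a DP-system P′ on a tree (connected acyclic) metric graph Γ′ assembled from E, with exactly one initial vertex, such that N_{P′}(t) ≤ N_P(t) for all t ≥ 0. -/

import Mathlib

/-!
Common framework: metric multigraphs assembled from an edge set `E`
(`ends : E → Sym2 V` with distinct endpoints), walks, dynamic-point
systems, stabilization times, and structural graph notions.
-/

/-- Walks in a multigraph on vertices `V` with edge set `E` and endpoint map `ends`:
an alternating sequence of vertices and edges. -/
inductive MGWalk {E V : Type} (ends : E → Sym2 V) : V → V → Type where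
  | nil (a : V) : MGWalk ends a a
  | cons {a b c : V} (e : E) (h : ends e = s(a, b)) (tail : MGWalk ends b c) :
      MGWalk ends a c

namespace MGWalk

variable {E V : Type} {ends : E → Sym2 V}

/-- Length of a walk with respect to an edge-length function. -/
def length (l : E → ℝ) : ∀ {a b : V}, MGWalk ends a b → ℝ
  | _, _, nil _ => 0
  | _, _, cons e _ tail => l e + tail.length l

/-- The list of edge entries of a walk. -/
def edges : ∀ {a b : V}, MGWalk ends a b → List E
  | _, _, nil _ => []
  | _, _, cons e _ tail => e :: tail.edges

end MGWalk

/-- A DP-system on a metric graph assembled from `E`: the vertex set is finite,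
no edge is a loop, the multigraph is connected, and the set of initial vertices
is nonempty. -/
def IsDPSystem {E V : Type} (ends : E → Sym2 V) (S : Set V) : Prop :=
  Finite V ∧ (∀ e, ¬ (ends e).IsDiag) ∧ (∀ a b : V, Nonempty (MGWalk ends a b)) ∧
    S.Nonempty

/-- A dynamic point is present at time `t` at distance `s` from endpoint `x` of
edge `e` (on the arc leaving `x`) iff some walk from an initial vertex to `x`
has length `t - s`. -/
def IsPoint {E V : Type} (ends : E → Sym2 V) (l : E → ℝ) (S : Set V)
    (t : ℝ) (e : E) (x : V) (s : ℝ) : Prop :=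
  x ∈ ends e ∧ 0 ≤ s ∧ s < l e ∧
    ∃ v₀ ∈ S, ∃ w : MGWalk ends v₀ x, w.length l = t - s

/-- Number of dynamic points on edge `e` at time `t`. -/
noncomputable def NptsEdge {E V : Type} (ends : E → Sym2 V) (l : E → ℝ)
    (S : Set V) (e : E) (t : ℝ) : ℕ :=
  Set.ncard {p : V × ℝ | IsPoint ends l S t e p.1 p.2}

/-- Total number of dynamic points at time `t`. -/
noncomputable def Npts {E V : Type} (ends : E → Sym2 V) (l : E → ℝ)
    (S : Set V) (t : ℝ) : ℕ :=
  Set.ncard {p : E × V × ℝ | IsPoint ends l S t p.1 p.2.1 p.2.2}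

/-- `T` is a stabilization bound: `T ≥ 0` and the total number of points is
constant from `T` on. -/
def IsStabBound {E V : Type} (ends : E → Sym2 V) (l : E → ℝ) (S : Set V)
    (T : ℝ) : Prop :=
  0 ≤ T ∧ ∀ t ≥ T, Npts ends l S t = Npts ends l S T

/-- The stabilization time: the least stabilization bound. -/
noncomputable def stabTime {E V : Type} (ends : E → Sym2 V) (l : E → ℝ)
    (S : Set V) : ℝ :=
  sInf {T : ℝ | IsStabBound ends l S T}

/-- `T` is a stabilization bound for edge `e`. -/
def IsEdgeStabBound {E V : Type} (ends : E → Sym2 V) (l : E → ℝ) (S : Set V)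
    (e : E) (T : ℝ) : Prop :=
  0 ≤ T ∧ ∀ t ≥ T, NptsEdge ends l S e t = NptsEdge ends l S e T

/-- The stabilization time of edge `e`. -/
noncomputable def edgeStabTime {E V : Type} (ends : E → Sym2 V) (l : E → ℝ)
    (S : Set V) (e : E) : ℝ :=
  sInf {T : ℝ | IsEdgeStabBound ends l S e T}

/-- Membership in `LSTDP(E)` (given the underlying system is a DP-system):
its stabilization time is maximal among all DP-systems assembled from `E`. -/
def IsMaxStab {E : Type} (l : E → ℝ) {V : Type} (ends : E → Sym2 V)
    (S : Set V) : Prop :=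
  ∀ (V' : Type) (ends' : E → Sym2 V') (S' : Set V'),
    IsDPSystem ends' S' → stabTime ends' l S' ≤ stabTime ends l S

/-- Degree of vertex `x` in the subgraph with edge set `C`. -/
noncomputable def edgeDegree {E V : Type} (ends : E → Sym2 V) (C : Set E)
    (x : V) : ℕ :=
  Set.ncard {e ∈ C | x ∈ ends e}

/-- Degree of vertex `x` in the whole graph. -/
noncomputable def degree {E V : Type} (ends : E → Sym2 V) (x : V) : ℕ :=
  Set.ncard {e : E | x ∈ ends e}

/-- `x` is a vertex of the subgraph with edge set `C`. -/
def OnEdgeSet {E V : Type} (ends : E → Sym2 V) (C : Set E) (x : V) : Prop :=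
  ∃ e ∈ C, x ∈ ends e

/-- The subgraph with edge set `C` is connected. -/
def EdgeSetConn {E V : Type} (ends : E → Sym2 V) (C : Set E) : Prop :=
  ∀ a b : V, OnEdgeSet ends C a → OnEdgeSet ends C b →
    ∃ w : MGWalk ends a b, ∀ e ∈ w.edges, e ∈ C

/-- `C` is the edge set of a cycle: nonempty, connected, and every vertex of its
support has degree exactly two in it. -/
def IsCycleSet {E V : Type} (ends : E → Sym2 V) (C : Set E) : Prop :=
  C.Nonempty ∧ EdgeSetConn ends C ∧
    ∀ x : V, OnEdgeSet ends C x → edgeDegree ends C x = 2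

/-- A bead graph: no vertex lies on two distinct cycles. -/
def IsBead {E V : Type} (ends : E → Sym2 V) : Prop :=
  ∀ C₁ C₂ : Set E, IsCycleSet ends C₁ → IsCycleSet ends C₂ → C₁ ≠ C₂ →
    ∀ x : V, ¬ (OnEdgeSet ends C₁ x ∧ OnEdgeSet ends C₂ x)

/-- The graph has no cycles. -/
def IsAcyclicG {E V : Type} (ends : E → Sym2 V) : Prop :=
  ∀ C : Set E, ¬ IsCycleSet ends C

/-- `H` is the edge set of a path subgraph: nonempty, connected, acyclic, and
all degrees within `H` are at most two. -/
def IsPathSet {E V : Type} (ends : E → Sym2 V) (H : Set E) : Prop :=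
  H.Nonempty ∧ EdgeSetConn ends H ∧ (∀ C ⊆ H, ¬ IsCycleSet ends C) ∧
    ∀ x : V, edgeDegree ends H x ≤ 2

/-- `x` is a terminal vertex of the path subgraph `H`. -/
def IsHandleTerminal {E V : Type} (ends : E → Sym2 V) (H : Set E) (x : V) : Prop :=
  edgeDegree ends H x = 1

/-- The type `W(v, e)` of walks from `v` to an endpoint of edge `e`. -/
def WalkTo {E V : Type} (ends : E → Sym2 V) (v : V) (e : E) : Type :=
  { p : Σ x : V, MGWalk ends v x // p.1 ∈ ends e }

/-- The relation `≈` on `W(v, e)`: walks with the same final endpoint are related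
iff their lengths are congruent modulo `2·l(e)`; walks with different final
endpoints are related iff the difference of their lengths is congruent to
`l(e)` modulo `2·l(e)`. -/
def wapprox {E V : Type} (ends : E → Sym2 V) (l : E → ℝ) (v : V) (e : E)
    (w₁ w₂ : WalkTo ends v e) : Prop :=
  (w₁.1.1 = w₂.1.1 ∧
    ∃ k : ℤ, w₁.1.2.length l - w₂.1.2.length l = k * (2 * l e)) ∨
  (w₁.1.1 ≠ w₂.1.1 ∧
    ∃ k : ℤ, w₁.1.2.length l - w₂.1.2.length l - l e = k * (2 * l e))

/-! ### Auxiliary material for `stmt1` -/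

namespace MGWalk

variable {E V : Type} {ends : E → Sym2 V}

/-- Concatenation of walks. -/
def append : ∀ {a b c : V}, MGWalk ends a b → MGWalk ends b c → MGWalk ends a c
  | _, _, _, nil _, w => w
  | _, _, _, cons e h t, w => cons e h (t.append w)

/-- Reversal of a walk. -/
def reverse : ∀ {a b : V}, MGWalk ends a b → MGWalk ends b a
  | _, _, nil a => nil a
  | _, _, cons e h t => t.reverse.append (cons e (h.trans Sym2.eq_swap) (nil _))

theorem length_eq_sum (l : E → ℝ) : ∀ {a b : V} (w : MGWalk ends a b),
    w.length l = (w.edges.map l).sum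
  | _, _, nil _ => by simp [length, edges]
  | _, _, cons e h t => by simp [length, edges, length_eq_sum l t]

/-- Mapping a walk through a graph morphism. -/
def mapW {V' : Type} {ends' : E → Sym2 V'} (φ : V → V')
    (hφ : ∀ e, ends' e = Sym2.map φ (ends e)) :
    ∀ {a b : V}, MGWalk ends a b → MGWalk ends' (φ a) (φ b)
  | _, _, nil a => nil (φ a)
  | _, _, cons e h t => cons e (by rw [hφ, h, Sym2.map_pair_eq]) (mapW φ hφ t)

theorem length_mapW {V' : Type} {ends' : E → Sym2 V'} (φ : V → V')
    (hφ : ∀ e, ends' e = Sym2.map φ (ends e)) (l : E → ℝ) :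
    ∀ {a b : V} (w : MGWalk ends a b), (w.mapW φ hφ).length l = w.length l
  | _, _, nil _ => rfl
  | _, _, cons e h t => by
      simp [mapW, length, length_mapW φ hφ l t]

end MGWalk

/-- The set of dynamic points of a DP-system at any fixed time is finite. -/
theorem stmt1_aux_finite {E V : Type} [Fintype E] [Finite V] (ends : E → Sym2 V)
    (l : E → ℝ) (hl : ∀ e, 0 < l e) (S : Set V) (t : ℝ) :
    {p : E × V × ℝ | IsPoint ends l S t p.1 p.2.1 p.2.2}.Finite := by
  rcases isEmpty_or_nonempty E with hE | hE
  · exact Set.toFinite _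
  · have hu : (Finset.univ : Finset E).Nonempty := Finset.univ_nonempty
    set δ := Finset.univ.inf' hu l with hδdef
    have hδ : 0 < δ := (Finset.lt_inf'_iff hu).2 fun e _ => hl e
    have hδle : ∀ e : E, δ ≤ l e := fun e => Finset.inf'_le l (Finset.mem_univ e)
    set N := ⌈t / δ⌉₊ with hN
    have hsum : ∀ li : List E, δ * li.length ≤ (li.map l).sum := by
      intro li
      induction li with
      | nil => simp
      | cons a li ih =>
          simp only [List.map_cons, List.sum_cons, List.length_cons]
          push_cast
          nlinarith [hδle a, ih]
    have hfin : ((fun li : List E => t - (li.map l).sum) '' {li | li.length ≤ N}).Finite :=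
      (List.finite_length_le E N).image _
    refine Set.Finite.subset (Set.Finite.prod Set.finite_univ
      (Set.Finite.prod Set.finite_univ hfin)) ?_
    rintro ⟨e, x, s⟩ ⟨hx, hs0, hsl, v, hv, w, hw⟩
    refine ⟨Set.mem_univ _, Set.mem_univ _, ⟨w.edges, ?_, ?_⟩⟩
    · have h1 : (w.edges.map l).sum ≤ t := by
        rw [← MGWalk.length_eq_sum]
        linarith [hw, hs0]
      have h2 : δ * (w.edges.length : ℝ) ≤ t := le_trans (hsum _) h1
      have h3 : (w.edges.length : ℝ) ≤ t / δ := by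
        rw [le_div_iff₀ hδ]
        nlinarith
      have h4 : (w.edges.length : ℝ) ≤ (N : ℝ) := h3.trans (Nat.le_ceil _)
      exact_mod_cast h4
    · show t - (List.map l w.edges).sum = _
      rw [← MGWalk.length_eq_sum, hw]; ring

section stmt1aux

variable {E V : Type} (ends : E → Sym2 V) (v₀ : V)

/-- Realization map from the unfolded tree's vertices to the original graph. -/
def stmt1φ (far : E → V) : Unit ⊕ E → V
  | .inl _ => v₀
  | .inr e => far e

/-- Invariant of the unfolding construction. -/
def stmt1Inv (A : Finset E) (p : E → Unit ⊕ E) (far : E → V) (ρ : E → ℕ) : Prop :=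
  (∀ e ∈ A, ends e = s(stmt1φ v₀ far (p e), far e)) ∧
  (∀ e ∈ A, ∀ f, p e = .inr f → f ∈ A ∧ ρ f < ρ e) ∧
  (∀ e ∈ A, ρ e < A.card)

theorem stmt1_reach {A : Finset E} {far : E → V}
    (hcl : ∀ f ∈ A, ∀ x, x ∈ ends f → (x = v₀ ∨ ∃ g ∈ A, far g = x)) :
    ∀ {a y : V}, MGWalk ends a y → (a = v₀ ∨ ∃ g ∈ A, far g = a) →
      (∃ e, e ∉ A ∧ ∃ x, x ∈ ends e ∧ (x = v₀ ∨ ∃ g ∈ A, far g = x)) ∨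
        (y = v₀ ∨ ∃ g ∈ A, far g = y) := by
  intro a y w
  induction w with
  | nil a => exact fun h => Or.inr h
  | cons e h t ih =>
      intro ha
      by_cases heA : e ∈ A
      · exact ih (hcl e heA _ (by rw [h]; exact Sym2.mem_mk_right _ _))
      · exact Or.inl ⟨e, heA, _, by rw [h]; exact Sym2.mem_mk_left _ _, ha⟩

theorem stmt1_step [Fintype E] [DecidableEq E] (conn : ∀ a b : V, Nonempty (MGWalk ends a b))
    {A : Finset E} {p : E → Unit ⊕ E} {far : E → V} {ρ : E → ℕ}
    (hinv : stmt1Inv ends v₀ A p far ρ) (hA : A ≠ Finset.univ) :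
    ∃ (e₀ : E) (p' : E → Unit ⊕ E) (far' : E → V) (ρ' : E → ℕ),
      e₀ ∉ A ∧ stmt1Inv ends v₀ (insert e₀ A) p' far' ρ' := by
  obtain ⟨h1, h2, h3⟩ := hinv
  have hcl : ∀ f ∈ A, ∀ x, x ∈ ends f → (x = v₀ ∨ ∃ g ∈ A, far g = x) := by
    intro f hf x hx
    rw [h1 f hf, Sym2.mem_iff] at hx
    rcases hx with hx | hx
    · subst hx
      cases hpf : p f with
      | inl u => exact Or.inl rfl
      | inr g => exact Or.inr ⟨g, (h2 f hf g hpf).1, rfl⟩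
    · exact Or.inr ⟨f, hf, hx.symm⟩
  obtain ⟨f₁, hf₁⟩ : ∃ f, f ∉ A := by
    by_contra hc; push_neg at hc; exact hA (Finset.eq_univ_iff_forall.mpr hc)
  obtain ⟨a, b, hab⟩ : ∃ a b, ends f₁ = s(a, b) :=
    Sym2.inductionOn (f := fun z => ∃ a b, z = s(a, b)) (ends f₁)
      (fun x y => ⟨x, y, rfl⟩)
  obtain ⟨w⟩ := conn v₀ a
  have hres := stmt1_reach ends v₀ hcl w (Or.inl rfl)
  have hgood : ∃ e, e ∉ A ∧ ∃ x, x ∈ ends e ∧ (x = v₀ ∨ ∃ g ∈ A, far g = x) := by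
    rcases hres with h | h
    · exact h
    · exact ⟨f₁, hf₁, a, by rw [hab]; exact Sym2.mem_mk_left _ _, h⟩
  obtain ⟨e₀, he₀, x, hx, hcov⟩ := hgood
  have hne : ∀ g ∈ A, g ≠ e₀ := fun g hg h => he₀ (h ▸ hg)
  obtain ⟨q, hq1, hq2⟩ : ∃ q : Unit ⊕ E,
      (∀ far'' : E → V, (∀ g ∈ A, far'' g = far g) → stmt1φ v₀ far'' q = x) ∧
      (∀ g, q = .inr g → g ∈ A) := by
    rcases hcov with rfl | ⟨g, hg, hgx⟩
    · exact ⟨.inl (), fun _ _ => rfl, fun g h => by cases h⟩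
    · exact ⟨.inr g, fun far'' hfar'' => (hfar'' g hg).trans hgx,
        fun g' h => by cases h; exact hg⟩
  refine ⟨e₀, Function.update p e₀ q, Function.update far e₀ (Sym2.Mem.other hx),
    Function.update ρ e₀ A.card, he₀, ?_, ?_, ?_⟩
  · intro e he
    rcases Finset.mem_insert.mp he with rfl | heA
    · rw [Function.update_self, Function.update_self]
      have hx' : stmt1φ v₀ (Function.update far e (Sym2.Mem.other hx)) q = x :=
        hq1 _ (fun g hg => Function.update_of_ne (hne g hg) _ _)
      rw [hx']
      exact (Sym2.other_spec hx).symm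
    · rw [Function.update_of_ne (hne e heA) _ _, Function.update_of_ne (hne e heA) _ _]
      have hφeq : stmt1φ v₀ (Function.update far e₀ (Sym2.Mem.other hx)) (p e)
          = stmt1φ v₀ far (p e) := by
        cases hpe : p e with
        | inl u => rfl
        | inr g =>
            show Function.update far e₀ (Sym2.Mem.other hx) g = far g
            exact Function.update_of_ne (hne g (h2 e heA g hpe).1) _ _
      rw [hφeq]
      exact h1 e heA
  · intro e he f hpf
    rcases Finset.mem_insert.mp he with rfl | heA
    · rw [Function.update_self] at hpf
      refine ⟨Finset.mem_insert_of_mem (hq2 f hpf), ?_⟩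
      rw [Function.update_of_ne (hne f (hq2 f hpf)) _ _, Function.update_self]
      exact h3 f (hq2 f hpf)
    · rw [Function.update_of_ne (hne e heA) _ _] at hpf
      obtain ⟨hfA, hlt⟩ := h2 e heA f hpf
      refine ⟨Finset.mem_insert_of_mem hfA, ?_⟩
      rw [Function.update_of_ne (hne f hfA) _ _, Function.update_of_ne (hne e heA) _ _]
      exact hlt
  · intro e he
    rw [Finset.card_insert_of_notMem he₀]
    rcases Finset.mem_insert.mp he with rfl | heA
    · rw [Function.update_self]; omega
    · rw [Function.update_of_ne (hne e heA) _ _]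
      exact lt_trans (h3 e heA) (by omega)

theorem stmt1_grow [Fintype E] (conn : ∀ a b : V, Nonempty (MGWalk ends a b)) :
    ∀ (k : ℕ) (A : Finset E) (p : E → Unit ⊕ E) (far : E → V) (ρ : E → ℕ),
      stmt1Inv ends v₀ A p far ρ → A.card + k = Fintype.card E →
      ∃ p' far' ρ', stmt1Inv ends v₀ Finset.univ p' far' ρ' := by
  intro k
  induction k with
  | zero =>
      intro A p far ρ hinv hcard
      have hA : A = Finset.univ := (Finset.card_eq_iff_eq_univ A).mp (by omega)
      exact ⟨p, far, ρ, hA ▸ hinv⟩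
  | succ k ih =>
      classical
      intro A p far ρ hinv hcard
      have hA : A ≠ Finset.univ := by
        intro h; subst h; rw [Finset.card_univ] at hcard; omega
      obtain ⟨e₀, p', far', ρ', he₀, hinv'⟩ := stmt1_step ends v₀ conn hinv hA
      exact ih _ p' far' ρ' hinv' (by rw [Finset.card_insert_of_notMem he₀]; omega)

end stmt1aux

/-- for any DP-system on a connected metric graph assembled from `E`
with positive real lengths, there is a DP-system on a tree assembled from `E` with
a single initial vertex whose number of points never exceeds that of the original. -/
theorem stmt1 {E : Type} [Fintype E] (l : E → ℝ) (hl : ∀ e, 0 < l e)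
    {V : Type} (ends : E → Sym2 V) (S : Set V) (hP : IsDPSystem ends S) :
    ∃ (V' : Type) (ends' : E → Sym2 V') (v₀ : V'),
      IsDPSystem ends' {v₀} ∧
      IsAcyclicG ends' ∧
      ∀ t : ℝ, 0 ≤ t → Npts ends' l {v₀} t ≤ Npts ends l S t := by
  classical
  obtain ⟨hVfin, hnodiag, hconn, hSne⟩ := hP
  obtain ⟨vs, hvs⟩ := hSne
  have : Finite V := hVfin
  obtain ⟨p, far, ρ, hinv⟩ := stmt1_grow ends vs hconn (Fintype.card E) ∅
    (fun _ => .inl ()) (fun _ => vs) (fun _ => 0)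
    ⟨fun e he => absurd he (Finset.notMem_empty e),
     fun e he => absurd he (Finset.notMem_empty e),
     fun e he => absurd he (Finset.notMem_empty e)⟩ (by simp)
  obtain ⟨h1, h2, h3⟩ := hinv
  replace h1 : ∀ e, ends e = s(stmt1φ vs far (p e), far e) :=
    fun e => h1 e (Finset.mem_univ e)
  replace h2 : ∀ e f, p e = .inr f → ρ f < ρ e :=
    fun e f h => (h2 e (Finset.mem_univ e) f h).2
  set φ : Unit ⊕ E → V := stmt1φ vs far with hφdef
  set ends' : E → Sym2 (Unit ⊕ E) := fun e => s(p e, Sum.inr e) with hends'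
  have hends'e : ∀ e, ends' e = s(p e, Sum.inr e) := fun e => rfl
  have hmor : ∀ e, ends e = Sym2.map φ (ends' e) := by
    intro e
    rw [hends'e e, Sym2.map_pair_eq]
    exact h1 e
  have hdiagφ : ∀ e, φ (p e) ≠ far e := by
    intro e heq
    apply hnodiag e
    rw [h1 e, Sym2.mk_isDiag_iff]
    exact heq
  have down : ∀ n (e : E), ρ e < n → Nonempty (MGWalk ends' (Sum.inr e) (Sum.inl ())) := by
    intro n
    induction n with
    | zero => intro e he; omega
    | succ n ih =>
        intro e he
        cases hpe : p e with
        | inl u =>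
            exact ⟨.cons e (by rw [hends'e e, hpe]; exact Sym2.eq_swap) (.nil _)⟩
        | inr f =>
            obtain ⟨w⟩ := ih f (by have := h2 e f hpe; omega)
            exact ⟨.cons e (by rw [hends'e e, hpe]; exact Sym2.eq_swap) w⟩
  have toRoot : ∀ a : Unit ⊕ E, Nonempty (MGWalk ends' a (Sum.inl ())) := by
    rintro (u | e)
    · cases u; exact ⟨.nil _⟩
    · exact down (ρ e + 1) e (by omega)
  refine ⟨Unit ⊕ E, ends', Sum.inl (), ⟨inferInstance, ?_, ?_, ⟨_, rfl⟩⟩, ?_, ?_⟩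
  · -- no loops
    intro e hd
    rw [hends'e e, Sym2.mk_isDiag_iff] at hd
    exact absurd (h2 e e hd) (lt_irrefl _)
  · -- connectivity
    intro a b
    obtain ⟨wa⟩ := toRoot a
    obtain ⟨wb⟩ := toRoot b
    exact ⟨wa.append wb.reverse⟩
  · -- acyclic
    intro C hC
    obtain ⟨⟨f₀, hf₀⟩, hconnC, hdeg⟩ := hC
    set rk : Unit ⊕ E → ℕ := Sum.elim (fun _ => 0) (fun e => ρ e + 1) with hrkdef
    have hsupfin : {x : Unit ⊕ E | OnEdgeSet ends' C x}.Finite := Set.toFinite _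
    have hsupne : {x : Unit ⊕ E | OnEdgeSet ends' C x}.Nonempty :=
      ⟨Sum.inr f₀, f₀, hf₀, by rw [hends'e f₀]; exact Sym2.mem_mk_right _ _⟩
    obtain ⟨x, hxmem, hxmax⟩ := Set.exists_max_image _ rk hsupfin hsupne
    have hkey : ∀ g ∈ C, x ∈ ends' g → x = Sum.inr g := by
      intro g hg hxg
      rw [hends'e g, Sym2.mem_iff] at hxg
      rcases hxg with hxg | hxg
      · exfalso
        have hmem' : Sum.inr g ∈ {x : Unit ⊕ E | OnEdgeSet ends' C x} :=
          ⟨g, hg, by rw [hends'e g]; exact Sym2.mem_mk_right _ _⟩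
        have hle : ρ g + 1 ≤ rk x := by
          have := hxmax _ hmem'
          simpa [hrkdef] using this
        have hrkx : rk x ≤ ρ g := by
          rw [hxg]
          cases hpg : p g with
          | inl u => simp [hrkdef]
          | inr f =>
              have := h2 g f hpg
              simp only [hrkdef, Sum.elim_inr]
              omega
        omega
      · exact hxg
    have hss : {e | e ∈ C ∧ x ∈ ends' e}.Subsingleton := by
      intro g1 hg1 g2 hg2
      have e1 := hkey g1 hg1.1 hg1.2
      have e2 := hkey g2 hg2.1 hg2.2
      exact Sum.inr.inj (e1.symm.trans e2)
    have hdx := hdeg x hxmem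
    unfold edgeDegree at hdx
    rcases hss.eq_empty_or_singleton with h | ⟨a, h⟩
    · rw [h, Set.ncard_empty] at hdx; omega
    · rw [h, Set.ncard_singleton] at hdx; omega
  · -- point count comparison
    intro t ht
    have hfinP := stmt1_aux_finite ends l hl S t
    set P1 := {q : E × V × ℝ | IsPoint ends l S t q.1 q.2.1 q.2.2} with hP1
    set P2 := {q : E × (Unit ⊕ E) × ℝ |
      IsPoint ends' l {Sum.inl ()} t q.1 q.2.1 q.2.2} with hP2
    set F : E × (Unit ⊕ E) × ℝ → E × V × ℝ := fun q => (q.1, φ q.2.1, q.2.2) with hF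
    have hmapsto : ∀ q ∈ P2, F q ∈ P1 := by
      rintro ⟨e, x, s⟩ ⟨hx, hs0, hsl, v, hv, w, hw⟩
      have hv' : v = Sum.inl () := hv
      subst hv'
      refine ⟨?_, hs0, hsl, vs, hvs, ?_⟩
      · show φ x ∈ ends e
        rw [hmor e]
        exact Sym2.mem_map.mpr ⟨x, hx, rfl⟩
      · exact ⟨w.mapW φ hmor, (MGWalk.length_mapW φ hmor l w).trans hw⟩
    have hinj : Set.InjOn F P2 := by
      rintro ⟨e1, x1, s1⟩ hq1 ⟨e2, x2, s2⟩ hq2 heq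
      obtain ⟨he, hx, hs⟩ : e1 = e2 ∧ φ x1 = φ x2 ∧ s1 = s2 := by
        simpa [hF, Prod.ext_iff] using heq
      subst he
      subst hs
      have hx1 : x1 ∈ ends' e1 := hq1.1
      have hx2 : x2 ∈ ends' e1 := hq2.1
      rw [hends'e e1, Sym2.mem_iff] at hx1 hx2
      have hxx : x1 = x2 := by
        rcases hx1 with h1a | h1a <;> rcases hx2 with h2a | h2a
        · rw [h1a, h2a]
        · exfalso
          apply hdiagφ e1
          rw [← h1a]
          show φ x1 = φ (Sum.inr e1)
          rw [← h2a]
          exact hx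
        · exfalso
          apply hdiagφ e1
          rw [← h2a]
          show φ x2 = φ (Sum.inr e1)
          rw [← h1a]
          exact hx.symm
        · rw [h1a, h2a]
      rw [hxx]
    have himg : F '' P2 ⊆ P1 := Set.image_subset_iff.mpr hmapsto
    calc Npts ends' l {Sum.inl ()} t = P2.ncard := rfl
      _ = (F '' P2).ncard := (Set.ncard_image_of_injOn hinj).symm
      _ ≤ P1.ncard := Set.ncard_le_ncard himg hfinP
      _ = Npts ends l S t := rfl
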